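/- Let f : ℂ → ℂ be holomorphic and bounded on the strip S_β = {z : 0 ≤ Im z ≤ β} with β > 0, and let b ∈ (0, β). With w(z) = exp(-z² - b²), one has 2πi·f(ib) = ∫_{-∞}^{∞} f(t)w(t)/(t - ib) dt − ∫_{-∞}^{∞} f(t + iβ)w(t + iβ)/(t + iβ − ib) dt. -/

import Mathlib

open MeasureTheory Complex Set Filter Topology

lemma ftc_log_seg (q v : ℂ) (a₁ a₂ : ℝ)
    (h : ∀ x ∈ Set.uIcc a₁ a₂, q + x * v ∈ Complex.slitPlane) :
    ∫ x in a₁..a₂, v * (q + x * v)⁻¹ =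
      Complex.log (q + a₂ * v) - Complex.log (q + a₁ * v) := by
  apply intervalIntegral.integral_eq_sub_of_hasDerivAt
  · intro x hx
    have h1 : HasDerivAt (fun z : ℂ => q + z * v) v (x : ℂ) := by
      simpa using ((hasDerivAt_id (x : ℂ)).mul_const v).const_add q
    have h2 : HasDerivAt (fun z : ℂ => Complex.log (q + z * v))
        ((q + x * v)⁻¹ * v) (x : ℂ) := by
      have := (Complex.hasDerivAt_log (h x hx)).comp (x : ℂ) h1; exact this
    simpa [mul_comm] using h2.comp_ofReal
  · apply ContinuousOn.intervalIntegrable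
    apply ContinuousOn.mul continuousOn_const
    apply ContinuousOn.inv₀
    · fun_prop
    · exact fun x hx => Complex.slitPlane_ne_zero (h x hx)

lemma log_sub_log_neg_of_im_pos {z : ℂ} (h : 0 < z.im) :
    Complex.log z - Complex.log (-z) = Real.pi * Complex.I := by
  apply Complex.ext
  · simp [Complex.sub_re, Complex.log_re]
  · simp [Complex.sub_im, Complex.log_im, Complex.arg_neg_eq_arg_sub_pi_of_im_pos h]

lemma log_neg_sub_log_of_im_neg {z : ℂ} (h : z.im < 0) :
    Complex.log (-z) - Complex.log z = Real.pi * Complex.I := by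
  apply Complex.ext
  · simp [Complex.sub_re, Complex.log_re]
  · simp [Complex.sub_im, Complex.log_im, Complex.arg_neg_eq_arg_add_pi_of_im_neg h]

theorem stmt_1 (β b : ℝ) (hβ : 0 < β) (hb : b ∈ Set.Ioo 0 β)
    (f : ℂ → ℂ)
    (hf_cont : ContinuousOn f {z : ℂ | 0 ≤ z.im ∧ z.im ≤ β})
    (hf_diff : DifferentiableOn ℂ f {z : ℂ | 0 < z.im ∧ z.im < β})
    (hf_bdd : ∃ K : ℝ, ∀ z : ℂ, 0 ≤ z.im → z.im ≤ β → ‖f z‖ ≤ K)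
    (w : ℂ → ℂ) (hw : ∀ z : ℂ, w z = Complex.exp (-z ^ 2 - (b : ℂ) ^ 2)) :
    2 * Real.pi * Complex.I * f (Complex.I * b) =
      (∫ t : ℝ, f t * w t / (t - Complex.I * b)) -
        ∫ t : ℝ, f (t + Complex.I * β) * w (t + Complex.I * β) /
          (t + Complex.I * β - Complex.I * b) := by
  obtain ⟨hb0, hbβ⟩ := hb
  obtain ⟨K, hK⟩ := hf_bdd
  have hK0 : 0 ≤ K := le_trans (norm_nonneg _) (hK 0 (by simp) (by simp [hβ.le]))
  set p : ℂ := Complex.I * (b : ℂ) with hp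
  have hpre : p.re = 0 := by simp [hp]
  have hpim : p.im = b := by simp [hp]
  have hw_cont : Continuous w := by rw [funext hw]; fun_prop
  have hw_diff : Differentiable ℂ w := by
    rw [funext hw]
    exact (((differentiable_pow 2).neg.sub_const _)).cexp
  have hwp : w p = 1 := by
    rw [hw p]
    have : -p ^ 2 - (b : ℂ) ^ 2 = 0 := by
      rw [hp, mul_pow, Complex.I_sq]; ring
    rw [this, Complex.exp_zero]
  have hUopen : IsOpen {z : ℂ | 0 < z.im ∧ z.im < β} :=
    isOpen_Ioo.preimage Complex.continuous_im
  have hpU : p ∈ {z : ℂ | 0 < z.im ∧ z.im < β} := by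
    simp only [Set.mem_setOf_eq, hpim]; exact ⟨hb0, hbβ⟩
  have hfw_contS : ContinuousOn (fun z => f z * w z) {z : ℂ | 0 ≤ z.im ∧ z.im ≤ β} :=
    hf_cont.mul hw_cont.continuousOn
  have hfw_diffU : DifferentiableOn ℂ (fun z => f z * w z) {z : ℂ | 0 < z.im ∧ z.im < β} :=
    hf_diff.mul hw_diff.differentiableOn
  have hfw_p : DifferentiableAt ℂ (fun z => f z * w z) p :=
    hfw_diffU.differentiableAt (hUopen.mem_nhds hpU)
  -- continuity of the dslope on the closed strip
  have hg₁contS : ContinuousOn (dslope (fun z => f z * w z) p) {z : ℂ | 0 ≤ z.im ∧ z.im ≤ β} := by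
    intro x hx
    rcases eq_or_ne x p with rfl | hne
    · exact (continuousAt_dslope_same.mpr hfw_p).continuousWithinAt
    · exact (continuousWithinAt_dslope_of_ne hne).mpr (hfw_contS x hx)
  -- pointwise splitting
  have hsplit : ∀ z : ℂ, z ≠ p →
      f z * w z / (z - p) = dslope (fun z => f z * w z) p z + f p * (z - p)⁻¹ := by
    intro z hz
    rw [dslope_of_ne _ hz, slope_def_field]
    have hzp : z - p ≠ 0 := sub_ne_zero.mpr hz
    field_simp
    rw [hwp]
    ring
  -- norm of w
  have hwnorm : ∀ z : ℂ, ‖w z‖ = Real.exp (-(z.re ^ 2) + z.im ^ 2 - b ^ 2) := by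
    intro z
    rw [hw z, Complex.norm_exp]
    congr 1
    simp [pow_two, Complex.mul_re]
    ring
  -- master norm bound
  have hgnorm : ∀ z : ℂ, 0 ≤ z.im → z.im ≤ β → ∀ d : ℝ, 0 < d → d ≤ ‖z - p‖ →
      ‖f z * w z / (z - p)‖ ≤ K * Real.exp (β ^ 2) * Real.exp (-(z.re ^ 2)) / d := by
    intro z h0 h1 d hd hdle
    rw [norm_div, norm_mul, hwnorm]
    have hfz := hK z h0 h1
    have hwle : Real.exp (-(z.re ^ 2) + z.im ^ 2 - b ^ 2) ≤
        Real.exp (β ^ 2) * Real.exp (-(z.re ^ 2)) := by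
      rw [← Real.exp_add]
      apply Real.exp_le_exp.mpr
      nlinarith [sq_nonneg b]
    calc ‖f z‖ * Real.exp (-(z.re ^ 2) + z.im ^ 2 - b ^ 2) / ‖z - p‖
        ≤ K * (Real.exp (β ^ 2) * Real.exp (-(z.re ^ 2))) / d := by
          apply div_le_div₀ (by positivity)
            (mul_le_mul hfz hwle (by positivity) hK0) hd hdle
      _ = K * Real.exp (β ^ 2) * Real.exp (-(z.re ^ 2)) / d := by ring_nf
  -- nonvanishing of denominators on the lines
  have hbotne : ∀ t : ℝ, ((t : ℂ)) ≠ p := by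
    intro t h
    have := congrArg Complex.im h
    simp [hpim] at this
    linarith [this]
  have htopne : ∀ t : ℝ, ((t : ℂ) + (β : ℂ) * Complex.I) ≠ p := by
    intro t h
    have := congrArg Complex.im h
    simp [hpim] at this
    linarith [this]
  -- the rectangle identity
  have key : ∀ T : ℝ, 0 < T →
      ((∫ x in (-T)..T, f x * w x / (x - p)) -
        ∫ x in (-T)..T, f (x + Complex.I * β) * w (x + Complex.I * β) /
          (x + Complex.I * β - p)) +
        Complex.I • (∫ y in (0:ℝ)..β, f ((T:ℂ) + (y:ℂ) * Complex.I) *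
          w ((T:ℂ) + (y:ℂ) * Complex.I) / ((T:ℂ) + (y:ℂ) * Complex.I - p)) -
        Complex.I • (∫ y in (0:ℝ)..β, f (((-T : ℝ):ℂ) + (y:ℂ) * Complex.I) *
          w (((-T : ℝ):ℂ) + (y:ℂ) * Complex.I) / (((-T : ℝ):ℂ) + (y:ℂ) * Complex.I - p))
      = 2 * Real.pi * Complex.I * f p := by
    intro T hT
    have hTne : ∀ y : ℝ, ((T:ℂ) + (y:ℂ) * Complex.I) ≠ p := by
      intro y h
      have := congrArg Complex.re h
      simp [hpre] at this
      exact hT.ne' this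
    have hTne' : ∀ y : ℝ, (((-T : ℝ):ℂ) + (y:ℂ) * Complex.I) ≠ p := by
      intro y h
      have := congrArg Complex.re h
      simp [hpre] at this
      linarith
    -- Cauchy-Goursat for the dslope
    have hrect := Complex.integral_boundary_rect_eq_zero_of_differentiable_on_off_countable
        (dslope (fun z => f z * w z) p) (((-T : ℝ) : ℂ)) ((T : ℂ) + (β : ℂ) * Complex.I)
        {p} (Set.countable_singleton p) ?hc ?hd
    case hc =>
      apply hg₁contS.mono
      intro z hz
      obtain ⟨h1, h2⟩ := Complex.mem_reProdIm.mp hz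
      simp only [Complex.ofReal_re, Complex.add_re, Complex.mul_re, Complex.ofReal_im,
        Complex.I_re, Complex.I_im, Complex.add_im, Complex.mul_im] at h1 h2
      have h2' : z.im ∈ Set.uIcc 0 β := by simpa using h2
      rw [Set.uIcc_of_le hβ.le] at h2'
      exact ⟨h2'.1, h2'.2⟩
    case hd =>
      intro x hx
      obtain ⟨hx1, hx2⟩ := hx
      obtain ⟨h1, h2⟩ := Complex.mem_reProdIm.mp hx1
      simp only [Complex.ofReal_re, Complex.add_re, Complex.mul_re, Complex.ofReal_im,
        Complex.I_re, Complex.I_im, Complex.add_im, Complex.mul_im] at h1 h2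
      have hxU : x ∈ {z : ℂ | 0 < z.im ∧ z.im < β} := by
        have h2' : x.im ∈ Set.Ioo (min 0 β) (max 0 β) := by simpa using h2
        rw [min_eq_left hβ.le, max_eq_right hβ.le] at h2'
        exact ⟨h2'.1, h2'.2⟩
      have hxne : x ≠ p := by simpa using hx2
      exact (differentiableAt_dslope_of_ne hxne).mpr
        (hfw_diffU.differentiableAt (hUopen.mem_nhds hxU))
    -- clean up coordinates in hrect
    simp only [Complex.ofReal_re, Complex.ofReal_im, Complex.add_re, Complex.add_im,
      Complex.mul_re, Complex.mul_im, Complex.I_re, Complex.I_im, mul_zero, mul_one,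
      zero_mul, sub_zero, add_zero, zero_add, Complex.ofReal_zero] at hrect
    -- integrability of the pieces on the edges
    have hd_bot : IntervalIntegrable (fun x : ℝ => dslope (fun z => f z * w z) p ((x:ℂ)))
        volume (-T) T := by
      apply ContinuousOn.intervalIntegrable
      apply hg₁contS.comp Complex.continuous_ofReal.continuousOn
      intro x _
      simp [hβ.le]
    have hd_top : IntervalIntegrable
        (fun x : ℝ => dslope (fun z => f z * w z) p ((x:ℂ) + (β:ℂ) * Complex.I))
        volume (-T) T := by
      apply ContinuousOn.intervalIntegrable
      apply hg₁contS.comp (by fun_prop : Continuous fun x : ℝ =>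
        (x:ℂ) + (β:ℂ) * Complex.I).continuousOn
      intro x _
      simp [hβ.le]
    have hd_right : IntervalIntegrable
        (fun y : ℝ => dslope (fun z => f z * w z) p ((T:ℂ) + (y:ℂ) * Complex.I))
        volume 0 β := by
      apply ContinuousOn.intervalIntegrable
      apply hg₁contS.comp (by fun_prop : Continuous fun y : ℝ =>
        (T:ℂ) + (y:ℂ) * Complex.I).continuousOn
      intro y hy
      rw [Set.uIcc_of_le hβ.le] at hy
      simpa using ⟨hy.1, hy.2⟩
    have hd_left : IntervalIntegrable
        (fun y : ℝ => dslope (fun z => f z * w z) p (((-T:ℝ):ℂ) + (y:ℂ) * Complex.I))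
        volume 0 β := by
      apply ContinuousOn.intervalIntegrable
      apply hg₁contS.comp (by fun_prop : Continuous fun y : ℝ =>
        ((-T:ℝ):ℂ) + (y:ℂ) * Complex.I).continuousOn
      intro y hy
      rw [Set.uIcc_of_le hβ.le] at hy
      simpa using ⟨hy.1, hy.2⟩
    have hi_bot : IntervalIntegrable (fun x : ℝ => f p * (((x:ℂ)) - p)⁻¹) volume (-T) T := by
      apply Continuous.intervalIntegrable
      exact continuous_const.mul ((Complex.continuous_ofReal.sub continuous_const).inv₀
        (fun x => sub_ne_zero.mpr (hbotne x)))
    have hi_top : IntervalIntegrable (fun x : ℝ => f p * (((x:ℂ) + (β:ℂ) * Complex.I) - p)⁻¹)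
        volume (-T) T := by
      apply Continuous.intervalIntegrable
      refine continuous_const.mul (Continuous.inv₀ (by fun_prop) ?_)
      exact fun x => sub_ne_zero.mpr (htopne x)
    have hi_right : IntervalIntegrable (fun y : ℝ => f p * (((T:ℂ) + (y:ℂ) * Complex.I) - p)⁻¹)
        volume 0 β := by
      apply Continuous.intervalIntegrable
      refine continuous_const.mul (Continuous.inv₀ (by fun_prop) ?_)
      exact fun y => sub_ne_zero.mpr (hTne y)
    have hi_left : IntervalIntegrable
        (fun y : ℝ => f p * ((((-T:ℝ):ℂ) + (y:ℂ) * Complex.I) - p)⁻¹) volume 0 β := by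
      apply Continuous.intervalIntegrable
      refine continuous_const.mul (Continuous.inv₀ (by fun_prop) ?_)
      exact fun y => sub_ne_zero.mpr (hTne' y)
    -- edge decompositions
    have hedge_bot : (∫ x in (-T)..T, f x * w x / (x - p)) =
        (∫ x in (-T)..T, dslope (fun z => f z * w z) p ((x:ℂ)))
          + f p * ∫ x in (-T)..T, (((x:ℂ)) - p)⁻¹ := by
      rw [← intervalIntegral.integral_const_mul, ← intervalIntegral.integral_add hd_bot hi_bot]
      apply intervalIntegral.integral_congr
      intro x _
      exact hsplit _ (hbotne x)
    have hedge_top : (∫ x in (-T)..T, f (x + Complex.I * β) * w (x + Complex.I * β) /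
          (x + Complex.I * β - p)) =
        (∫ x in (-T)..T, dslope (fun z => f z * w z) p ((x:ℂ) + (β:ℂ) * Complex.I))
          + f p * ∫ x in (-T)..T, (((x:ℂ) + (β:ℂ) * Complex.I) - p)⁻¹ := by
      rw [← intervalIntegral.integral_const_mul, ← intervalIntegral.integral_add hd_top hi_top]
      apply intervalIntegral.integral_congr
      intro x _
      rw [mul_comm Complex.I ((β:ℂ))]
      exact hsplit _ (htopne x)
    have hedge_right : (∫ y in (0:ℝ)..β, f ((T:ℂ) + (y:ℂ) * Complex.I) *
          w ((T:ℂ) + (y:ℂ) * Complex.I) / ((T:ℂ) + (y:ℂ) * Complex.I - p)) =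
        (∫ y in (0:ℝ)..β, dslope (fun z => f z * w z) p ((T:ℂ) + (y:ℂ) * Complex.I))
          + f p * ∫ y in (0:ℝ)..β, (((T:ℂ) + (y:ℂ) * Complex.I) - p)⁻¹ := by
      rw [← intervalIntegral.integral_const_mul,
        ← intervalIntegral.integral_add hd_right hi_right]
      apply intervalIntegral.integral_congr
      intro y _
      exact hsplit _ (hTne y)
    have hedge_left : (∫ y in (0:ℝ)..β, f (((-T:ℝ):ℂ) + (y:ℂ) * Complex.I) *
          w (((-T:ℝ):ℂ) + (y:ℂ) * Complex.I) / (((-T:ℝ):ℂ) + (y:ℂ) * Complex.I - p)) =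
        (∫ y in (0:ℝ)..β, dslope (fun z => f z * w z) p (((-T:ℝ):ℂ) + (y:ℂ) * Complex.I))
          + f p * ∫ y in (0:ℝ)..β, ((((-T:ℝ):ℂ) + (y:ℂ) * Complex.I) - p)⁻¹ := by
      rw [← intervalIntegral.integral_const_mul,
        ← intervalIntegral.integral_add hd_left hi_left]
      apply intervalIntegral.integral_congr
      intro y _
      exact hsplit _ (hTne' y)
    -- explicit values of the Cauchy-kernel edge integrals
    have hB_bot : (∫ x in (-T)..T, (((x:ℂ)) - p)⁻¹)
        = Complex.log ((T:ℂ) - p) - Complex.log (-((T:ℂ) + p)) := by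
      have e : ∀ x ∈ Set.uIcc (-T) T, -p + (x:ℂ) * 1 ∈ Complex.slitPlane := by
        intro x _
        apply Or.inr
        simp [hpim]
        exact hb0.ne'
      rw [intervalIntegral.integral_congr (g := fun x : ℝ => (1:ℂ) * (-p + (x:ℂ) * 1)⁻¹)
        (fun x _ => by ring), ftc_log_seg _ _ _ _ e,
        show -p + ((T:ℝ):ℂ) * 1 = (T:ℂ) - p by ring,
        show -p + ((-T:ℝ):ℂ) * 1 = -((T:ℂ) + p) by push_cast; ring]
    have hB_top : (∫ x in (-T)..T, (((x:ℂ) + (β:ℂ) * Complex.I) - p)⁻¹)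
        = Complex.log ((T:ℂ) - p + (β:ℂ) * Complex.I)
          - Complex.log (-((T:ℂ) + p - (β:ℂ) * Complex.I)) := by
      have e : ∀ x ∈ Set.uIcc (-T) T,
          ((β:ℂ) * Complex.I - p) + (x:ℂ) * 1 ∈ Complex.slitPlane := by
        intro x _
        apply Or.inr
        simp [hpim]
        intro h
        linarith
      rw [intervalIntegral.integral_congr
        (g := fun x : ℝ => (1:ℂ) * (((β:ℂ) * Complex.I - p) + (x:ℂ) * 1)⁻¹)
        (fun x _ => by ring), ftc_log_seg _ _ _ _ e,
        show ((β:ℂ) * Complex.I - p) + ((T:ℝ):ℂ) * 1 = (T:ℂ) - p + (β:ℂ) * Complex.I by ring,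
        show ((β:ℂ) * Complex.I - p) + ((-T:ℝ):ℂ) * 1
          = -((T:ℂ) + p - (β:ℂ) * Complex.I) by push_cast; ring]
    have hB_right : Complex.I * (∫ y in (0:ℝ)..β, (((T:ℂ) + (y:ℂ) * Complex.I) - p)⁻¹)
        = Complex.log ((T:ℂ) - p + (β:ℂ) * Complex.I) - Complex.log ((T:ℂ) - p) := by
      have e : ∀ y ∈ Set.uIcc (0:ℝ) β,
          ((T:ℂ) - p) + (y:ℂ) * Complex.I ∈ Complex.slitPlane := by
        intro y _
        apply Or.inl
        simp [hpre]
        exact hT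
      rw [← intervalIntegral.integral_const_mul,
        intervalIntegral.integral_congr
          (g := fun y : ℝ => Complex.I * (((T:ℂ) - p) + (y:ℂ) * Complex.I)⁻¹)
          (fun y _ => by ring),
        ftc_log_seg _ _ _ _ e,
        show ((T:ℂ) - p) + ((β:ℝ):ℂ) * Complex.I = (T:ℂ) - p + (β:ℂ) * Complex.I by push_cast; ring,
        show ((T:ℂ) - p) + ((0:ℝ):ℂ) * Complex.I = (T:ℂ) - p by push_cast; ring]
    have hB_left : Complex.I * (∫ y in (0:ℝ)..β, ((((-T:ℝ):ℂ) + (y:ℂ) * Complex.I) - p)⁻¹)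
        = Complex.log ((T:ℂ) + p - (β:ℂ) * Complex.I) - Complex.log ((T:ℂ) + p) := by
      have e : ∀ y ∈ Set.uIcc (0:ℝ) β,
          ((T:ℂ) + p) + (y:ℂ) * (-Complex.I) ∈ Complex.slitPlane := by
        intro y _
        apply Or.inl
        simp [hpre]
        exact hT
      rw [← intervalIntegral.integral_const_mul,
        intervalIntegral.integral_congr
          (g := fun y : ℝ => (-Complex.I) * (((T:ℂ) + p) + (y:ℂ) * (-Complex.I))⁻¹)
          (fun y _ => by
            beta_reduce
            rw [show ((T:ℂ) + p) + (y:ℂ) * (-Complex.I)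
              = -(((-T:ℝ):ℂ) + (y:ℂ) * Complex.I - p) by push_cast; ring, inv_neg]
            ring),
        ftc_log_seg _ _ _ _ e,
        show ((T:ℂ) + p) + ((β:ℝ):ℂ) * (-Complex.I)
          = (T:ℂ) + p - (β:ℂ) * Complex.I by push_cast; ring,
        show ((T:ℂ) + p) + ((0:ℝ):ℂ) * (-Complex.I) = (T:ℂ) + p by push_cast; ring]
    have hlog1 : Complex.log ((T:ℂ) + p) - Complex.log (-((T:ℂ) + p))
        = (Real.pi : ℂ) * Complex.I := by
      apply log_sub_log_neg_of_im_pos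
      simp [hpim]
      exact hb0
    have hlog2 : Complex.log (-((T:ℂ) + p - (β:ℂ) * Complex.I))
        - Complex.log ((T:ℂ) + p - (β:ℂ) * Complex.I) = (Real.pi : ℂ) * Complex.I := by
      apply log_neg_sub_log_of_im_neg
      simp [hpim]
      linarith
    rw [hedge_bot, hedge_top, hedge_right, hedge_left]
    simp only [smul_eq_mul] at hrect ⊢
    linear_combination hrect + f p * (hB_bot - hB_top + hB_right - hB_left + hlog1 + hlog2)
  -- continuity of the rows
  have hf0bot : Continuous fun t : ℝ => f (t:ℂ) := by
    rw [← continuousOn_univ]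
    apply hf_cont.comp Complex.continuous_ofReal.continuousOn
    intro t _
    simp [hβ.le]
  have hf0top : Continuous fun t : ℝ => f ((t:ℂ) + Complex.I * β) := by
    rw [← continuousOn_univ]
    apply hf_cont.comp (by fun_prop : Continuous fun t : ℝ =>
      (t:ℂ) + Complex.I * (β:ℂ)).continuousOn
    intro t _
    simp [hβ.le]
  have hcontf_bot : Continuous (fun t : ℝ => f (t:ℂ) * w (t:ℂ) / ((t:ℂ) - p)) := by
    exact (hf0bot.mul (hw_cont.comp Complex.continuous_ofReal)).div
      (by fun_prop) (fun t => sub_ne_zero.mpr (hbotne t))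
  have hcontf_top : Continuous (fun t : ℝ => f ((t:ℂ) + Complex.I * β) *
      w ((t:ℂ) + Complex.I * β) / ((t:ℂ) + Complex.I * β - p)) := by
    refine (hf0top.mul (hw_cont.comp (by fun_prop))).div (by fun_prop) ?_
    intro t
    apply sub_ne_zero.mpr
    rw [mul_comm Complex.I ((β:ℂ))]
    exact htopne t
  -- integrability of the rows
  have hint_bot : Integrable (fun t : ℝ => f (t:ℂ) * w (t:ℂ) / ((t:ℂ) - p)) := by
    refine Integrable.mono'
      (g := fun t : ℝ => (K * Real.exp (β ^ 2) / b) * Real.exp (-1 * t ^ 2))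
      ((integrable_exp_neg_mul_sq one_pos).const_mul _)
      hcontf_bot.aestronglyMeasurable (ae_of_all _ ?_)
    intro t
    have h1 : (b:ℝ) ≤ ‖(t:ℂ) - p‖ := by
      have h2 := Complex.abs_im_le_norm ((t:ℂ) - p)
      refine le_trans ?_ h2
      rw [Complex.sub_im, hpim, Complex.ofReal_im, zero_sub, abs_neg, abs_of_pos hb0]
    have h3 := hgnorm (t:ℂ) (by simp) (by simp [hβ.le]) b hb0 h1
    rw [Complex.ofReal_re] at h3
    refine h3.trans (le_of_eq ?_)
    beta_reduce
    rw [neg_one_mul]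
    ring
  have hint_top : Integrable (fun t : ℝ => f ((t:ℂ) + Complex.I * β) *
      w ((t:ℂ) + Complex.I * β) / ((t:ℂ) + Complex.I * β - p)) := by
    refine Integrable.mono'
      (g := fun t : ℝ => (K * Real.exp (β ^ 2) / (β - b)) * Real.exp (-1 * t ^ 2))
      ((integrable_exp_neg_mul_sq one_pos).const_mul _)
      hcontf_top.aestronglyMeasurable (ae_of_all _ ?_)
    intro t
    have h1 : (β - b) ≤ ‖(t:ℂ) + Complex.I * β - p‖ := by
      have h2 := Complex.abs_im_le_norm ((t:ℂ) + Complex.I * β - p)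
      refine le_trans ?_ h2
      have him : ((t:ℂ) + Complex.I * β - p).im = β - b := by simp [hpim]
      rw [him, abs_of_pos (by linarith)]
    have h3 := hgnorm ((t:ℂ) + Complex.I * β) (by simp [hβ.le]) (by simp) (β - b)
      (by linarith) h1
    have hre : ((t:ℂ) + Complex.I * β).re = t := by simp
    rw [hre] at h3
    refine h3.trans (le_of_eq ?_)
    beta_reduce
    rw [neg_one_mul]
    ring
  -- convergence of the horizontal edges
  have htend_bot : Tendsto (fun T : ℝ => ∫ x in (-T)..T, f (x:ℂ) * w (x:ℂ) / ((x:ℂ) - p))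
      atTop (𝓝 (∫ t : ℝ, f (t:ℂ) * w (t:ℂ) / ((t:ℂ) - p))) :=
    intervalIntegral_tendsto_integral hint_bot tendsto_neg_atTop_atBot tendsto_id
  have htend_top : Tendsto (fun T : ℝ => ∫ x in (-T)..T, f ((x:ℂ) + Complex.I * β) *
        w ((x:ℂ) + Complex.I * β) / ((x:ℂ) + Complex.I * β - p))
      atTop (𝓝 (∫ t : ℝ, f ((t:ℂ) + Complex.I * β) *
        w ((t:ℂ) + Complex.I * β) / ((t:ℂ) + Complex.I * β - p))) :=
    intervalIntegral_tendsto_integral hint_top tendsto_neg_atTop_atBot tendsto_id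
  -- vertical edges tend to zero
  have hvert : ∀ σ : ℝ, 1 ≤ |σ| →
      ‖Complex.I • ∫ y in (0:ℝ)..β, f ((σ:ℂ) + (y:ℂ) * Complex.I) *
        w ((σ:ℂ) + (y:ℂ) * Complex.I) / ((σ:ℂ) + (y:ℂ) * Complex.I - p)‖
        ≤ K * Real.exp (β ^ 2) * Real.exp (-σ ^ 2) * β := by
    intro σ hσ
    rw [norm_smul, Complex.norm_I, one_mul]
    have h2 : ∀ y ∈ Set.uIoc (0:ℝ) β, ‖f ((σ:ℂ) + (y:ℂ) * Complex.I) *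
        w ((σ:ℂ) + (y:ℂ) * Complex.I) / ((σ:ℂ) + (y:ℂ) * Complex.I - p)‖
        ≤ K * Real.exp (β ^ 2) * Real.exp (-σ ^ 2) := by
      intro y hy
      rw [Set.uIoc_of_le hβ.le] at hy
      have h1 : (1:ℝ) ≤ ‖(σ:ℂ) + (y:ℂ) * Complex.I - p‖ := by
        refine hσ.trans ?_
        have h2' := Complex.abs_re_le_norm ((σ:ℂ) + (y:ℂ) * Complex.I - p)
        refine le_trans (le_of_eq ?_) h2'
        have : ((σ:ℂ) + (y:ℂ) * Complex.I - p).re = σ := by simp [hpre]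
        rw [this]
      have h3 := hgnorm ((σ:ℂ) + (y:ℂ) * Complex.I) (by simp [hy.1.le]) (by simp [hy.2]) 1
        one_pos h1
      rw [div_one] at h3
      have hre : ((σ:ℂ) + (y:ℂ) * Complex.I).re = σ := by simp
      rw [hre] at h3
      exact h3
    have h4 := intervalIntegral.norm_integral_le_of_norm_le_const h2
    rw [sub_zero, abs_of_pos hβ] at h4
    exact h4
  have hexp0 : Tendsto (fun T : ℝ => Real.exp (-T ^ 2)) atTop (𝓝 0) :=
    Real.tendsto_exp_atBot.comp (tendsto_neg_atTop_atBot.comp (tendsto_pow_atTop two_ne_zero))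
  have hbound_tend : Tendsto (fun T : ℝ => K * Real.exp (β ^ 2) * Real.exp (-T ^ 2) * β)
      atTop (𝓝 0) := by
    have := (hexp0.const_mul (K * Real.exp (β ^ 2))).mul_const β
    simpa using this
  have hvtend_R : Tendsto (fun T : ℝ => Complex.I • ∫ y in (0:ℝ)..β,
      f ((T:ℂ) + (y:ℂ) * Complex.I) * w ((T:ℂ) + (y:ℂ) * Complex.I) /
        ((T:ℂ) + (y:ℂ) * Complex.I - p)) atTop (𝓝 0) := by
    apply squeeze_zero_norm' _ hbound_tend
    filter_upwards [eventually_ge_atTop 1] with T hT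
    exact hvert T (le_abs.mpr (Or.inl hT))
  have hvtend_L : Tendsto (fun T : ℝ => Complex.I • ∫ y in (0:ℝ)..β,
      f (((-T:ℝ):ℂ) + (y:ℂ) * Complex.I) * w (((-T:ℝ):ℂ) + (y:ℂ) * Complex.I) /
        (((-T:ℝ):ℂ) + (y:ℂ) * Complex.I - p)) atTop (𝓝 0) := by
    apply squeeze_zero_norm'
      (a := fun T : ℝ => K * Real.exp (β ^ 2) * Real.exp (-(-T) ^ 2) * β)
    · filter_upwards [eventually_ge_atTop 1] with T hT
      exact hvert (-T) (le_abs.mpr (Or.inr (by linarith)))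
    · have he : (fun T : ℝ => K * Real.exp (β ^ 2) * Real.exp (-(-T) ^ 2) * β)
          = fun T : ℝ => K * Real.exp (β ^ 2) * Real.exp (-T ^ 2) * β := by
        funext T
        rw [neg_sq]
      rw [he]
      exact hbound_tend
  -- put everything together
  have hΦ := ((htend_bot.sub htend_top).add hvtend_R).sub hvtend_L
  have hconst : Tendsto (fun T : ℝ =>
      ((∫ x in (-T)..T, f (x:ℂ) * w (x:ℂ) / ((x:ℂ) - p)) -
        ∫ x in (-T)..T, f ((x:ℂ) + Complex.I * β) * w ((x:ℂ) + Complex.I * β) /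
          ((x:ℂ) + Complex.I * β - p)) +
        Complex.I • (∫ y in (0:ℝ)..β, f ((T:ℂ) + (y:ℂ) * Complex.I) *
          w ((T:ℂ) + (y:ℂ) * Complex.I) / ((T:ℂ) + (y:ℂ) * Complex.I - p)) -
        Complex.I • (∫ y in (0:ℝ)..β, f (((-T:ℝ):ℂ) + (y:ℂ) * Complex.I) *
          w (((-T:ℝ):ℂ) + (y:ℂ) * Complex.I) / (((-T:ℝ):ℂ) + (y:ℂ) * Complex.I - p)))
      atTop (𝓝 (2 * Real.pi * Complex.I * f p)) := by
    apply Tendsto.congr' _ tendsto_const_nhds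
    filter_upwards [eventually_gt_atTop 0] with T hT
    exact (key T hT).symm
  have hfin := tendsto_nhds_unique hconst hΦ
  rw [add_zero, sub_zero] at hfin
  exact hfin
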